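/- arXiv:1307.5377 — 2 statements merged into one kernel-verified Lean document; each statement's English description precedes it below -/
import Mathlib

section
/- Let (σ,η): (A,λ,L) → (A',λ',L) be a Pom_L-open morphism of labelled asynchronous systems. Then for every n ≥ 0 the images of the label maps coincide: λ_n(Q_n(A)) = λ'_n(Q_n(A')) as subsets of the set of finite subsets of L. -/
/-- An asynchronous (transition) system: a state space with an initial state,
in which every event occurs in at least one transition. -/
structure AsyncSystem (S E : Type) where
  init : S
  indep : E → E → Prop
  tran : S → E → S → Prop
  indep_symm : ∀ a b, indep a b → indep b a
  indep_irrefl : ∀ a, ¬ indep a a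
  det : ∀ s a s' s'', tran s a s' → tran s a s'' → s' = s''
  diamond : ∀ a b s s' s'', indep a b → tran s a s' → tran s' b s'' →
    ∃ s₁, tran s b s₁ ∧ tran s₁ a s''
  event_occurs : ∀ e, ∃ s₁ s₂, tran s₁ e s₂

/-- A state is reachable if there is a finite sequence of transitions from the
initial state to it. -/
def AsyncSystem.Reachable {S E : Type} (A : AsyncSystem S E) (s : S) : Prop :=
  Relation.ReflTransGen (fun x y => ∃ e, A.tran x e y) A.init s

/-- `A.rebase s` is the asynchronous system `A(s)`: `A` with initial state replaced by `s`. -/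
def AsyncSystem.rebase {S E : Type} (A : AsyncSystem S E) (s : S) : AsyncSystem S E :=
  { A with init := s }

/-- `A.Exec s w t` means `s · w = t`: the word `w` can be executed from `s`, ending in `t`. -/
def AsyncSystem.Exec {S E : Type} (A : AsyncSystem S E) : S → List E → S → Prop
  | s, [], t => s = t
  | s, e :: w, t => ∃ u, A.tran s e u ∧ A.Exec u w t

/-- A morphism of asynchronous systems with a total event map `η`. -/
def IsMorphism {S E S' E' : Type} (A : AsyncSystem S E) (A' : AsyncSystem S' E')
    (σ : S → S') (η : E → E') : Prop :=
  σ A.init = A'.init ∧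
  (∀ s₁ e s₂, A.tran s₁ e s₂ → A'.tran (σ s₁) (η e) (σ s₂)) ∧
  (∀ e₁ e₂, A.indep e₁ e₂ → A'.indep (η e₁) (η e₂))

/-- An open morphism of asynchronous systems (its event map is total). -/
def IsOpenMorphism {S E S' E' : Type} (A : AsyncSystem S E) (A' : AsyncSystem S' E')
    (σ : S → S') (η : E → E') : Prop :=
  IsMorphism A A' σ η ∧
  (∀ s e' u', A'.tran (σ s) e' u' → ∃ e u, A.tran s e u ∧ η e = e' ∧ σ u = u') ∧
  (∀ s, A.Reachable s → ∀ e₁ e₂ u v, A.tran s e₁ u → A.tran u e₂ v →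
    A'.indep (η e₁) (η e₂) → A.indep e₁ e₂)

/-- A `Pom_L`-open morphism of labelled asynchronous systems: an open morphism
preserving labels. -/
def IsPomOpen {S E S' E' L : Type} (A : AsyncSystem S E) (lab : E → L)
    (A' : AsyncSystem S' E') (lab' : E' → L) (σ : S → S') (η : E → E') : Prop :=
  IsOpenMorphism A A' σ η ∧ ∀ e, lab' (η e) = lab e

/-- Two labelled asynchronous systems are `Pom_L`-bisimilar if there is a third labelled
asynchronous system with `Pom_L`-open morphisms to each of them. -/
def Bisimilar {S E S' E' L : Type} (A : AsyncSystem S E) (lab : E → L)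
    (A' : AsyncSystem S' E') (lab' : E' → L) : Prop :=
  ∃ (S'' E'' : Type) (A'' : AsyncSystem S'' E'') (lab'' : E'' → L)
    (σ : S'' → S) (η : E'' → E) (σ' : S'' → S') (η' : E'' → E'),
    IsPomOpen A'' lab'' A lab σ η ∧ IsPomOpen A'' lab'' A' lab' σ' η'

/-- `Qn A n`: pairs of a reachable state `s` and an `n`-tuple of pairwise independent
events executable from `s`.  For `n = 0` this is the set of reachable states. -/
def Qn {S E : Type} (A : AsyncSystem S E) (n : ℕ) : Set (S × (Fin n → E)) :=
  {p | A.Reachable p.1 ∧ (∃ t, A.Exec p.1 (List.ofFn p.2) t) ∧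
    ∀ i j : Fin n, i < j → A.indep (p.2 i) (p.2 j)}

/-- The vertex set `λ⁺E` of the simplicial scheme of a labelled asynchronous system. -/
def VertexSet {S E L : Type} (A : AsyncSystem S E) (lab : E → L) : Set L :=
  {l | ∃ (a : E) (s u : S), A.Reachable s ∧ A.tran s a u ∧ lab a = l}

/-- The simplices of the simplicial scheme of a labelled asynchronous system:
finite nonempty sets `{λ(a₁), …, λ(a_k)}` (`k ≥ 1`) where the `aᵢ` are pairwise
independent and `s · a₁ ⋯ a_k` is defined for some reachable state `s`. -/
def Simplices {S E L : Type} (A : AsyncSystem S E) (lab : E → L) : Set (Set L) :=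
  {X | ∃ (k : ℕ) (a : Fin (k + 1) → E) (s : S),
    A.Reachable s ∧
    (∀ i j, i < j → A.indep (a i) (a j)) ∧
    (∃ t, A.Exec s (List.ofFn a) t) ∧
    X = Set.range fun i => lab (a i)}

section Aux

variable {S E S' E' L : Type} {A : AsyncSystem S E} {A' : AsyncSystem S' E'}
  {σ : S → S'} {η : E → E'}

lemma reach_image (hm : IsMorphism A A' σ η) {s : S} (h : A.Reachable s) :
    A'.Reachable (σ s) := by
  induction h with
  | refl => rw [hm.1]; exact Relation.ReflTransGen.refl
  | tail _ h ih =>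
    obtain ⟨e, he⟩ := h
    exact ih.tail ⟨η e, hm.2.1 _ _ _ he⟩

lemma exec_image (hm : IsMorphism A A' σ η) :
    ∀ (w : List E) (s t : S), A.Exec s w t → A'.Exec (σ s) (w.map η) (σ t) := by
  intro w
  induction w with
  | nil => intro s t h; cases h; rfl
  | cons e w ih =>
    rintro s t ⟨u, hu, hw⟩
    exact ⟨σ u, hm.2.1 _ _ _ hu, ih _ _ hw⟩

lemma reach_lift (ho : IsOpenMorphism A A' σ η) {s' : S'} (h : A'.Reachable s') :
    ∃ s, A.Reachable s ∧ σ s = s' := by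
  induction h with
  | refl => exact ⟨A.init, Relation.ReflTransGen.refl, ho.1.1⟩
  | tail _ h ih =>
    obtain ⟨s, hs, rfl⟩ := ih
    obtain ⟨e', he'⟩ := h
    obtain ⟨e, u, hu, -, rfl⟩ := ho.2.1 s e' _ he'
    exact ⟨u, hs.tail ⟨e, hu⟩, rfl⟩

lemma exec_lift (ho : IsOpenMorphism A A' σ η) :
    ∀ (w' : List E') (s : S) (t' : S'), A'.Exec (σ s) w' t' →
      ∃ w t, A.Exec s w t ∧ w.map η = w' := by
  intro w'
  induction w' with
  | nil => intro s t' _; exact ⟨[], s, rfl, rfl⟩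
  | cons e' w' ih =>
    rintro s t' ⟨u', hu', hw'⟩
    obtain ⟨e, u, hu, rfl, rfl⟩ := ho.2.1 s e' u' hu'
    obtain ⟨w, t, hw, hmap⟩ := ih u t' hw'
    exact ⟨e :: w, t, ⟨u, hu, hw⟩, by simp [hmap]⟩

lemma reach_exec {s t : S} {w : List E} (hs : A.Reachable s) (h : A.Exec s w t) :
    A.Reachable t := by
  induction w generalizing s with
  | nil => cases h; exact hs
  | cons e w ih =>
    obtain ⟨u, hu, hw⟩ := h
    exact ih (hs.tail ⟨e, hu⟩) hw

lemma swap_lemma (ho : IsOpenMorphism A A' σ η) :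
    ∀ (w : List E) (s u t : S) (e : E), A.Reachable s → A.tran s e u → A.Exec u w t →
      (∀ f ∈ w, A'.indep (η e) (η f)) → ∀ f ∈ w, A.indep e f := by
  intro w
  induction w with
  | nil => intro _ _ _ _ _ _ _ _ f hf; cases hf
  | cons g w ih =>
    rintro s u t e hs he ⟨v, hv, hw⟩ hind f hf
    have heg : A.indep e g := ho.2.2 s hs e g u v he hv (hind g (by simp))
    rcases List.mem_cons.mp hf with rfl | hf
    · exact heg
    · obtain ⟨s₁, hs₁, he₁⟩ := A.diamond e g s u v heg he hv
      exact ih s₁ v t e (hs.tail ⟨g, hs₁⟩) he₁ hw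
        (fun f hf => hind f (by simp [hf])) f hf

lemma pairwise_lift (ho : IsOpenMorphism A A' σ η) :
    ∀ (w : List E) (s t : S), A.Reachable s → A.Exec s w t →
      (w.map η).Pairwise A'.indep → w.Pairwise A.indep := by
  intro w
  induction w with
  | nil => intro _ _ _ _ _; exact List.Pairwise.nil
  | cons e w ih =>
    rintro s t hs ⟨u, hu, hw⟩ hp
    rw [List.map_cons, List.pairwise_cons] at hp
    refine List.pairwise_cons.mpr ⟨?_, ih u t (hs.tail ⟨e, hu⟩) hw hp.2⟩
    exact swap_lemma ho w s u t e hs hu hw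
      (fun f hf => hp.1 (η f) (List.mem_map_of_mem hf))

end Aux

/-- for a `Pom_L`-open morphism `(σ, η) : (A, λ, L) → (A', λ', L)` the
images of the label maps `λ_n : Q_n(A) → P^f(L)` and `λ'_n : Q_n(A') → P^f(L)`,
`(s, e₁, …, e_n) ↦ {λ(e₁), …, λ(e_n)}`, coincide for every `n ≥ 0`. -/
theorem label_images_eq {S E S' E' L : Type}
    (A : AsyncSystem S E) (lab : E → L) (A' : AsyncSystem S' E') (lab' : E' → L)
    (σ : S → S') (η : E → E')
    (hpom : IsPomOpen A lab A' lab' σ η) (n : ℕ) :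
    (fun p : S × (Fin n → E) => Set.range fun i => lab (p.2 i)) '' Qn A n =
      (fun p : S' × (Fin n → E') => Set.range fun i => lab' (p.2 i)) '' Qn A' n := by
  obtain ⟨ho, hlab⟩ := hpom
  have hm := ho.1
  ext X
  simp only [Set.mem_image]
  constructor
  · rintro ⟨⟨s, e⟩, ⟨hreach, ⟨t, hexec⟩, hind⟩, rfl⟩
    refine ⟨(σ s, fun i => η (e i)), ⟨reach_image hm hreach, ⟨σ t, ?_⟩,
      fun i j hij => hm.2.2 _ _ (hind i j hij)⟩, ?_⟩
    · have := exec_image hm (List.ofFn e) s t hexec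
      rw [List.map_ofFn] at this
      exact this
    · simp only [hlab]
  · rintro ⟨⟨s', e'⟩, ⟨hreach', ⟨t', hexec'⟩, hind'⟩, rfl⟩
    obtain ⟨s, hreach, rfl⟩ := reach_lift ho hreach'
    obtain ⟨w, t, hexec, hmap⟩ := exec_lift ho (List.ofFn e') s t' hexec'
    have hlen : w.length = n := by
      have := congrArg List.length hmap
      simpa using this
    have hpair : w.Pairwise A.indep := by
      refine pairwise_lift ho w s t hreach hexec ?_
      rw [hmap, List.pairwise_ofFn]
      intro i j hij
      exact hind' i j hij
    refine ⟨(s, fun i => w.get (Fin.cast hlen.symm i)), ⟨hreach, ⟨t, ?_⟩, ?_⟩, ?_⟩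
    · have : List.ofFn (fun i : Fin n => w.get (Fin.cast hlen.symm i)) = w := by
        subst hlen
        exact List.ofFn_get w
      rw [this]
      exact hexec
    · intro i j hij
      rw [List.pairwise_iff_get] at hpair
      exact hpair _ _ (by simpa using hij)
    · simp only
      have key : ∀ i : Fin n, lab (w.get (Fin.cast hlen.symm i)) = lab' (e' i) := by
        intro i
        have hi : (i : ℕ) < w.length := hlen ▸ i.isLt
        have heta : η (w.get (Fin.cast hlen.symm i)) = e' i := by
          have h1 : (List.map η w)[(i : ℕ)]'(by simpa using hi) = e' i := by
            simp [hmap]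
          simpa [List.get_eq_getElem] using h1
        rw [← heta, hlab]
      ext l
      simp only [Set.mem_range]
      exact ⟨fun ⟨i, hi⟩ => ⟨i, by rw [← hi, key]⟩, fun ⟨i, hi⟩ => ⟨i, by rw [key, hi]⟩⟩
end

section
/- Let (A,λ,L) and (A',λ',L) be Pom_L-bisimilar labelled asynchronous systems. Then for every word w = a₁⋯a_k ∈ E* with k ≥ 0 such that s₀·w is defined, there exists a word w' = a₁'⋯a_k' ∈ E'* such that s₀'·w' is defined and the simplicial schemes associated to (A(s₀·w),λ,L) and to (A'(s₀'·w'),λ',L) are equal (hence their homology groups are isomorphic in every degree). -/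
section Aux

variable {S E S' E' L : Type}

theorem exec_append (A : AsyncSystem S E) (l₁ l₂ : List E) (s t : S) :
    A.Exec s (l₁ ++ l₂) t ↔ ∃ m, A.Exec s l₁ m ∧ A.Exec m l₂ t := by
  induction l₁ generalizing s with
  | nil => simp [AsyncSystem.Exec]
  | cons e l ih =>
    simp only [List.cons_append, AsyncSystem.Exec]
    constructor
    · rintro ⟨u, hu, hex⟩
      obtain ⟨m, h1, h2⟩ := (ih u).1 hex
      exact ⟨m, ⟨u, hu, h1⟩, h2⟩
    · rintro ⟨m, ⟨u, hu, h1⟩, h2⟩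
      exact ⟨u, hu, (ih u).2 ⟨m, h1, h2⟩⟩

theorem exec_map {A : AsyncSystem S E} {A' : AsyncSystem S' E'} {σ : S → S'} {η : E → E'}
    (htr : ∀ s₁ e s₂, A.tran s₁ e s₂ → A'.tran (σ s₁) (η e) (σ s₂))
    {l : List E} {s t : S} (h : A.Exec s l t) : A'.Exec (σ s) (l.map η) (σ t) := by
  induction l generalizing s with
  | nil => cases h; rfl
  | cons e l ih =>
    obtain ⟨u, hu, hex⟩ := h
    exact ⟨σ u, htr _ _ _ hu, ih hex⟩

theorem exec_lift_s9 {A : AsyncSystem S E} {A' : AsyncSystem S' E'} {σ : S → S'} {η : E → E'}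
    (hlift : ∀ s e' u', A'.tran (σ s) e' u' → ∃ e u, A.tran s e u ∧ η e = e' ∧ σ u = u')
    {l' : List E'} {s : S} {t' : S'} (h : A'.Exec (σ s) l' t') :
    ∃ (l : List E) (t : S), l.map η = l' ∧ σ t = t' ∧ A.Exec s l t := by
  induction l' generalizing s with
  | nil => exact ⟨[], s, rfl, h, rfl⟩
  | cons e' l' ih =>
    obtain ⟨u', hu', hex⟩ := h
    obtain ⟨e, u, htr, he, hσu⟩ := hlift s e' u' hu'
    obtain ⟨l, t, hmap, hσt, hexec⟩ := ih (hσu ▸ hex)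
    exact ⟨e :: l, t, by simp [he, hmap], hσt, u, htr, hexec⟩

theorem reachable_map {A : AsyncSystem S E} {A' : AsyncSystem S' E'} {σ : S → S'} {η : E → E'}
    (hinit : σ A.init = A'.init)
    (htr : ∀ s₁ e s₂, A.tran s₁ e s₂ → A'.tran (σ s₁) (η e) (σ s₂))
    {s : S} (h : A.Reachable s) : A'.Reachable (σ s) := by
  induction h with
  | refl => exact hinit ▸ Relation.ReflTransGen.refl
  | tail _ h ih => obtain ⟨e, he⟩ := h; exact ih.tail ⟨η e, htr _ _ _ he⟩

theorem reachable_lift {A : AsyncSystem S E} {A' : AsyncSystem S' E'} {σ : S → S'} {η : E → E'}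
    (hinit : σ A.init = A'.init)
    (hlift : ∀ s e' u', A'.tran (σ s) e' u' → ∃ e u, A.tran s e u ∧ η e = e' ∧ σ u = u')
    {s' : S'} (h : A'.Reachable s') : ∃ s, A.Reachable s ∧ σ s = s' := by
  induction h with
  | refl => exact ⟨A.init, Relation.ReflTransGen.refl, hinit⟩
  | tail _ h ih =>
    obtain ⟨s, hs, rfl⟩ := ih
    obtain ⟨e', he'⟩ := h
    obtain ⟨e, u, htr, _, hσu⟩ := hlift s e' _ he'
    exact ⟨u, hs.tail ⟨e, htr⟩, hσu⟩

theorem exec_reachable {A : AsyncSystem S E} {l : List E} {s t : S}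
    (h : A.Exec s l t) (hs : A.Reachable s) : A.Reachable t := by
  induction l generalizing s with
  | nil => cases h; exact hs
  | cons e l ih =>
    obtain ⟨u, hu, hex⟩ := h
    exact ih hex (hs.tail ⟨e, hu⟩)

/-- Swap lemma: an event independent of all of `l` executed after `l` can be executed first. -/
theorem exec_swap {A : AsyncSystem S E} {l : List E} {b : E}
    (hind : ∀ e ∈ l, A.indep e b) {s m v : S}
    (hex : A.Exec s l m) (hb : A.tran m b v) :
    ∃ u, A.tran s b u ∧ A.Exec u l v := by
  induction l generalizing s with
  | nil => cases hex; exact ⟨v, hb, rfl⟩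
  | cons e l ih =>
    obtain ⟨u, hu, hexec⟩ := hex
    obtain ⟨x, hx, hexec'⟩ := ih (fun e he => hind e (List.mem_cons_of_mem _ he)) hexec
    obtain ⟨s₁, h1, h2⟩ := A.diamond e b s u x
      (hind e (List.mem_cons_self (a := e) (l := l))) hu hx
    exact ⟨s₁, h1, x, h2, hexec'⟩

/-- Reflection of independence along an open morphism. -/
theorem indep_reflect {A : AsyncSystem S E} {A' : AsyncSystem S' E'} {η : E → E'}
    (hrefl : ∀ s, A.Reachable s → ∀ e₁ e₂ u v, A.tran s e₁ u → A.tran u e₂ v →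
      A'.indep (η e₁) (η e₂) → A.indep e₁ e₂)
    {l : List E} {s t : S} (hs : A.Reachable s) (hex : A.Exec s l t)
    (hC : (l.map η).Pairwise A'.indep) : l.Pairwise A.indep := by
  induction l generalizing s with
  | nil => exact List.Pairwise.nil
  | cons e l ih =>
    obtain ⟨u, hu, hexec⟩ := hex
    have hu' : A.Reachable u := hs.tail ⟨e, hu⟩
    rw [List.map_cons, List.pairwise_cons] at hC
    have htail : l.Pairwise A.indep := ih hu' hexec hC.2
    refine List.Pairwise.cons ?_ htail
    intro e' he'
    obtain ⟨l₁, l₂, rfl⟩ := List.append_of_mem he'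
    obtain ⟨m, hm1, hm2⟩ := (exec_append A l₁ (e' :: l₂) u t).1 hexec
    obtain ⟨v, hv, -⟩ := hm2
    have hind1 : ∀ f ∈ l₁, A.indep f e' := by
      intro f hf
      have := (List.pairwise_append.1 htail).2.2 f hf e' (List.mem_cons_self (a := e') (l := l₂))
      exact this
    obtain ⟨x, hx, -⟩ := exec_swap hind1 hm1 hv
    exact hrefl s hs e e' u x hu hx (hC.1 (η e') (List.mem_map_of_mem (f := η) he'))

theorem ofFn_cast {n : ℕ} (l : List E) (h : l.length = n) :
    List.ofFn (fun i : Fin n => l.get (Fin.cast h.symm i)) = l := by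
  subst h
  simpa using List.ofFn_get l

/-- The key lemma: a Pom-open morphism induces equality of simplicial schemes. -/
theorem schemes_eq {A : AsyncSystem S E} {labB : E → L} {A' : AsyncSystem S' E'}
    {labC : E' → L} {σ : S → S'} {η : E → E'}
    (h : IsPomOpen A labB A' labC σ η) :
    VertexSet A labB = VertexSet A' labC ∧ Simplices A labB = Simplices A' labC := by
  obtain ⟨⟨⟨hinit, htr, hind⟩, hlift, hrefl⟩, hlab⟩ := h
  constructor
  · ext x
    constructor
    · rintro ⟨a, s, u, hs, ha, rfl⟩
      exact ⟨η a, σ s, σ u, reachable_map hinit htr hs, htr _ _ _ ha, hlab a⟩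
    · rintro ⟨a', s', u', hs', ha', rfl⟩
      obtain ⟨s, hs, rfl⟩ := reachable_lift hinit hlift hs'
      obtain ⟨e, u, he, rfl, -⟩ := hlift s a' u' ha'
      exact ⟨e, s, u, hs, he, (hlab e).symm⟩
  · ext X
    constructor
    · rintro ⟨k, a, s, hs, hI, ⟨t, hex⟩, rfl⟩
      refine ⟨k, η ∘ a, σ s, reachable_map hinit htr hs,
        fun i j hij => hind _ _ (hI i j hij), ⟨σ t, ?_⟩, ?_⟩
      · have := exec_map htr hex
        rwa [← List.map_ofFn] 
      · ext x
        simp only [Set.mem_range, Function.comp]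
        exact exists_congr fun i => by rw [hlab]
    · rintro ⟨k, a', s', hs', hI', ⟨t', hex'⟩, rfl⟩
      obtain ⟨s, hs, rfl⟩ := reachable_lift hinit hlift hs'
      obtain ⟨l, t, hmap, hσt, hexec⟩ := exec_lift_s9 hlift hex'
      have hlen : l.length = k + 1 := by
        have := congrArg List.length hmap
        simpa using this
      set a : Fin (k + 1) → E := fun i => l.get (Fin.cast hlen.symm i) with ha
      have hofn : List.ofFn a = l := ofFn_cast l hlen
      have hηa : η ∘ a = a' := by
        rw [← List.ofFn_inj, ← List.map_ofFn, hofn, hmap]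
      have hpw : l.Pairwise A.indep := by
        refine indep_reflect hrefl hs hexec ?_
        rw [hmap, List.pairwise_ofFn]
        exact hI'
      refine ⟨k, a, s, hs, ?_, ⟨t, hofn ▸ hexec⟩, ?_⟩
      · rw [← List.pairwise_ofFn (f := a), hofn]; exact hpw
      · ext x
        simp only [Set.mem_range]
        refine exists_congr fun i => ?_
        rw [← hlab (a i), show η (a i) = a' i from congrFun hηa i]

theorem pomOpen_rebase {A : AsyncSystem S E} {labB : E → L} {A' : AsyncSystem S' E'}
    {labC : E' → L} {σ : S → S'} {η : E → E'}
    (h : IsPomOpen A labB A' labC σ η) {s : S} (hs : A.Reachable s) :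
    IsPomOpen (A.rebase s) labB (A'.rebase (σ s)) labC σ η := by
  obtain ⟨⟨⟨hinit, htr, hind⟩, hlift, hrefl⟩, hlab⟩ := h
  refine ⟨⟨⟨rfl, htr, hind⟩, hlift, ?_⟩, hlab⟩
  intro x hx e₁ e₂ u v h1 h2 hI
  exact hrefl x (hs.trans hx) e₁ e₂ u v h1 h2 hI

end Aux

/-- if `(A, λ, L)` and `(A', λ', L)` are `Pom_L`-bisimilar then for every
word `w` with `s₀ · w` defined there is a word `w'` with `s₀' · w'` defined such that
the simplicial schemes of `(A(s₀ · w), λ, L)` and `(A'(s₀' · w'), λ', L)` are equal. -/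
theorem bisimilar_word_schemes_eq {S E S' E' L : Type}
    (A : AsyncSystem S E) (lab : E → L) (A' : AsyncSystem S' E') (lab' : E' → L)
    (h : Bisimilar A lab A' lab')
    (w : List E) (t : S) (hw : A.Exec A.init w t) :
    ∃ (w' : List E') (t' : S'), w'.length = w.length ∧ A'.Exec A'.init w' t' ∧
      VertexSet (A.rebase t) lab = VertexSet (A'.rebase t') lab' ∧
      Simplices (A.rebase t) lab = Simplices (A'.rebase t') lab' := by
  obtain ⟨S'', E'', A'', lab'', σ, η, σ', η', h1, h2⟩ := h
  obtain ⟨⟨⟨hinit, htr, hind⟩, hlift, hrefl⟩, hlab⟩ := h1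
  -- lift the word w to A''
  have hw' : A.Exec (σ A''.init) w t := hinit ▸ hw
  obtain ⟨w'', t'', hmap, hσt, hexec⟩ := exec_lift_s9 hlift hw'
  have ht'' : A''.Reachable t'' := exec_reachable hexec Relation.ReflTransGen.refl
  -- push the word to A'
  obtain ⟨⟨⟨hinit', htr', hind'⟩, hlift', hrefl'⟩, hlab'⟩ := h2
  refine ⟨w''.map η', σ' t'', by simp [← hmap], ?_, ?_, ?_⟩
  · have := exec_map htr' hexec
    rwa [hinit'] at this
  · have e1 := (schemes_eq (pomOpen_rebase ⟨⟨⟨hinit, htr, hind⟩, hlift, hrefl⟩, hlab⟩ ht'')).1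
    have e2 := (schemes_eq (pomOpen_rebase ⟨⟨⟨hinit', htr', hind'⟩, hlift', hrefl'⟩, hlab'⟩ ht'')).1
    rw [hσt] at e1
    rw [← e1, ← e2]
  · have e1 := (schemes_eq (pomOpen_rebase ⟨⟨⟨hinit, htr, hind⟩, hlift, hrefl⟩, hlab⟩ ht'')).2
    have e2 := (schemes_eq (pomOpen_rebase ⟨⟨⟨hinit', htr', hind'⟩, hlift', hrefl'⟩, hlab'⟩ ht'')).2
    rw [hσt] at e1
    rw [← e1, ← e2]
end
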